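/- Let Ω, Ω_d ⊆ ℝⁿ be disjoint measurable sets with Ω of finite measure, let γ : ℝⁿ × ℝⁿ → ℝ, and let u : ℝⁿ × [0,∞) → ℝ satisfy, for each t ≥ 0: u(·,t) integrable on Ω; u(x,t) = 0 for x ∈ Ω_d; ∂_t u(x,t) = ∫_{Ω ∪ Ω_d} ( u(y,t) γ(y,x) − u(x,t) γ(x,y) ) dy for x ∈ Ω with all integrands integrable on Ω × (Ω ∪ Ω_d); |∂_t u(x,t)| ≤ g(x) for some integrable g; and s ↦ ∫_Ω ∫_{Ω_d} u(x,s) γ(x,y) dy dx continuous. Then for all t ≥ 0, ∫_Ω u(x,t) dx = ∫_Ω u(x,0) dx − ∫_0^t ∫_Ω ∫_{Ω_d} u(x,s) γ(x,y) dy dx ds; that is, the loss of probability mass from Ω up to time t equals the time-integrated probability flux from Ω into the exit region Ω_d. -/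

import Mathlib

open MeasureTheory

/-- Euclidean space `ℝⁿ`. -/
abbrev Euc (n : ℕ) := EuclideanSpace ℝ (Fin n)

/-- Exit-time flux balance: for the volume-constrained master equation on `Ω` with
exit region `Ω_d`, the loss of probability mass from `Ω` up to time `t` equals the
time-integrated probability flux from `Ω` into `Ω_d`:
`∫_Ω u(x,t) dx = ∫_Ω u(x,0) dx − ∫_0^t ∫_Ω ∫_{Ω_d} u(x,s) γ(x,y) dy dx ds`. -/
theorem exit_time_integrated_flux {n : ℕ}
    (Ω Ωd : Set (Euc n)) (hΩ : MeasurableSet Ω) (hΩd : MeasurableSet Ωd)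
    (hdisj : Disjoint Ω Ωd) (hΩfin : volume Ω < ⊤)
    (γ : Euc n → Euc n → ℝ)
    (u : Euc n → ℝ → ℝ)
    (hu : ∀ t : ℝ, 0 ≤ t → IntegrableOn (fun x => u x t) Ω)
    (hvc : ∀ t : ℝ, 0 ≤ t → ∀ x ∈ Ωd, u x t = 0)
    (hint1 : ∀ t : ℝ, 0 ≤ t →
      IntegrableOn (fun p : Euc n × Euc n => u p.2 t * γ p.2 p.1) (Ω ×ˢ (Ω ∪ Ωd)))
    (hint2 : ∀ t : ℝ, 0 ≤ t →
      IntegrableOn (fun p : Euc n × Euc n => u p.1 t * γ p.1 p.2) (Ω ×ˢ (Ω ∪ Ωd)))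
    (hderiv : ∀ x ∈ Ω, ∀ t : ℝ, 0 ≤ t →
      HasDerivAt (u x) (∫ y in Ω ∪ Ωd, (u y t * γ y x - u x t * γ x y)) t)
    (g : Euc n → ℝ) (hg : IntegrableOn g Ω)
    (hbound : ∀ x ∈ Ω, ∀ t : ℝ, 0 ≤ t →
      |∫ y in Ω ∪ Ωd, (u y t * γ y x - u x t * γ x y)| ≤ g x)
    (hcont : ContinuousOn (fun s => ∫ x in Ω, ∫ y in Ωd, u x s * γ x y) (Set.Ici (0 : ℝ))) :
    ∀ t : ℝ, 0 ≤ t →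
      (∫ x in Ω, u x t) =
        (∫ x in Ω, u x 0) - ∫ s in (0 : ℝ)..t, ∫ x in Ω, ∫ y in Ωd, u x s * γ x y := by
  intro t ht
  set D : Euc n → ℝ → ℝ :=
    fun x s => ∫ y in Ω ∪ Ωd, (u y s * γ y x - u x s * γ x y) with hD
  set φ : ℝ → ℝ := fun s => ∫ x in Ω, ∫ y in Ωd, u x s * γ x y with hφ
  set F : ℝ → ℝ := fun s => ∫ x in Ω, u x s with hF
  -- integrability on the Ω×Ω and Ω×Ωd blocks, w.r.t. product of restricted measures
  have hsub1 : Ω ×ˢ Ω ⊆ Ω ×ˢ (Ω ∪ Ωd) :=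
    Set.prod_mono_right Set.subset_union_left
  have hsub2 : Ω ×ˢ Ωd ⊆ Ω ×ˢ (Ω ∪ Ωd) :=
    Set.prod_mono_right Set.subset_union_right
  have h1S : ∀ s : ℝ, 0 ≤ s →
      Integrable (fun p : Euc n × Euc n => u p.2 s * γ p.2 p.1)
        ((volume.restrict Ω).prod (volume.restrict (Ω ∪ Ωd))) := by
    intro s hs; rw [Measure.prod_restrict]; exact hint1 s hs
  have h2S : ∀ s : ℝ, 0 ≤ s →
      Integrable (fun p : Euc n × Euc n => u p.1 s * γ p.1 p.2)
        ((volume.restrict Ω).prod (volume.restrict (Ω ∪ Ωd))) := by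
    intro s hs; rw [Measure.prod_restrict]; exact hint2 s hs
  have h1Ω : ∀ s : ℝ, 0 ≤ s →
      Integrable (fun p : Euc n × Euc n => u p.2 s * γ p.2 p.1)
        ((volume.restrict Ω).prod (volume.restrict Ω)) := by
    intro s hs; rw [Measure.prod_restrict]
    exact (hint1 s hs).mono_set hsub1
  have h2Ω : ∀ s : ℝ, 0 ≤ s →
      Integrable (fun p : Euc n × Euc n => u p.1 s * γ p.1 p.2)
        ((volume.restrict Ω).prod (volume.restrict Ω)) := by
    intro s hs; rw [Measure.prod_restrict]
    exact (hint2 s hs).mono_set hsub1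
  have h2Ωd : ∀ s : ℝ, 0 ≤ s →
      Integrable (fun p : Euc n × Euc n => u p.1 s * γ p.1 p.2)
        ((volume.restrict Ω).prod (volume.restrict Ωd)) := by
    intro s hs; rw [Measure.prod_restrict]
    exact (hint2 s hs).mono_set hsub2
  have hres : volume.restrict (Ω ∪ Ωd) = volume.restrict Ω + volume.restrict Ωd :=
    Measure.restrict_union hdisj hΩd
  -- a.e. decomposition of D
  have hkey : ∀ s : ℝ, 0 ≤ s → (fun x => D x s) =ᵐ[volume.restrict Ω]
      (fun x => (∫ y in Ω, u y s * γ y x) -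
        ((∫ y in Ω, u x s * γ x y) + ∫ y in Ωd, u x s * γ x y)) := by
    intro s hs
    filter_upwards [(h1S s hs).prod_right_ae, (h2S s hs).prod_right_ae] with x hxA hxB
    have hxA' : Integrable (fun y => u y s * γ y x)
        (volume.restrict Ω + volume.restrict Ωd) := by rwa [← hres]
    have hxB' : Integrable (fun y => u x s * γ x y)
        (volume.restrict Ω + volume.restrict Ωd) := by rwa [← hres]
    obtain ⟨hA1, hA2⟩ := integrable_add_measure.mp hxA'
    obtain ⟨hB1, hB2⟩ := integrable_add_measure.mp hxB'
    have hAzero : (∫ y in Ωd, u y s * γ y x) = 0 := by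
      have hz : ∀ y ∈ Ωd, u y s * γ y x = 0 := fun y hy => by rw [hvc s hs y hy, zero_mul]
      calc (∫ y in Ωd, u y s * γ y x) = ∫ _ in Ωd, (0:ℝ) := setIntegral_congr_fun hΩd hz
        _ = 0 := by simp
    calc D x s = (∫ y in Ω ∪ Ωd, u y s * γ y x) - ∫ y in Ω ∪ Ωd, u x s * γ x y :=
          integral_sub hxA hxB
      _ = ((∫ y in Ω, u y s * γ y x) + ∫ y in Ωd, u y s * γ y x) -
          ((∫ y in Ω, u x s * γ x y) + ∫ y in Ωd, u x s * γ x y) := by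
          rw [hres, integral_add_measure hA1 hA2, integral_add_measure hB1 hB2]
      _ = _ := by rw [hAzero, add_zero]
  -- clean iterated integrability
  have I1 : ∀ s : ℝ, 0 ≤ s →
      Integrable (fun x => ∫ y in Ω, u y s * γ y x) (volume.restrict Ω) := by
    intro s hs; exact (h1Ω s hs).integral_prod_left
  have I2 : ∀ s : ℝ, 0 ≤ s →
      Integrable (fun x => ∫ y in Ω, u x s * γ x y) (volume.restrict Ω) := by
    intro s hs; exact (h2Ω s hs).integral_prod_left
  have I3 : ∀ s : ℝ, 0 ≤ s →
      Integrable (fun x => ∫ y in Ωd, u x s * γ x y) (volume.restrict Ω) := by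
    intro s hs; exact (h2Ωd s hs).integral_prod_left
  -- integrability of x ↦ D x s on Ω
  have hDint : ∀ s : ℝ, 0 ≤ s →
      Integrable (fun x => D x s) (volume.restrict Ω) := by
    intro s hs
    have I23 : Integrable
        (fun x => (∫ y in Ω, u x s * γ x y) + ∫ y in Ωd, u x s * γ x y)
        (volume.restrict Ω) := by exact (I2 s hs).add (I3 s hs)
    exact ((I1 s hs).sub I23).congr (hkey s hs).symm
  -- the flux identity
  have hflux : ∀ s : ℝ, 0 ≤ s → (∫ x in Ω, D x s) = -(φ s) := by
    intro s hs
    have hswap : (∫ x in Ω, ∫ y in Ω, u y s * γ y x) =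
        ∫ x in Ω, ∫ y in Ω, u x s * γ x y :=
      integral_integral_swap (f := fun x y => u y s * γ y x) (h1Ω s hs)
    calc (∫ x in Ω, D x s)
        = ∫ x in Ω, ((∫ y in Ω, u y s * γ y x) -
            ((∫ y in Ω, u x s * γ x y) + ∫ y in Ωd, u x s * γ x y)) :=
          integral_congr_ae (hkey s hs)
      _ = (∫ x in Ω, ∫ y in Ω, u y s * γ y x) -
          ((∫ x in Ω, ∫ y in Ω, u x s * γ x y) + ∫ x in Ω, ∫ y in Ωd, u x s * γ x y) := by
          have I23 : Integrable
              (fun x => (∫ y in Ω, u x s * γ x y) + ∫ y in Ωd, u x s * γ x y)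
              (volume.restrict Ω) := by exact (I2 s hs).add (I3 s hs)
          rw [integral_sub (I1 s hs) I23, integral_add (I2 s hs) (I3 s hs)]
      _ = -(φ s) := by rw [hswap, hφ]; ring
  -- continuity of F on [0, t]
  have hFcont : ContinuousOn F (Set.Icc 0 t) := by
    have hptw : ∀ x ∈ Ω, ∀ r ∈ Set.Ici (0:ℝ), ∀ s ∈ Set.Ici (0:ℝ),
        ‖u x s - u x r‖ ≤ g x * ‖s - r‖ := by
      intro x hx r hr s hs
      exact (convex_Ici 0).norm_image_sub_le_of_norm_hasDerivWithin_le
        (fun τ hτ => (hderiv x hx τ hτ).hasDerivWithinAt)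
        (fun τ hτ => by rw [Real.norm_eq_abs]; exact hbound x hx τ hτ) hr hs
    have hlip : LipschitzOnWith (Real.toNNReal (∫ x in Ω, g x)) F (Set.Icc 0 t) := by
      apply LipschitzOnWith.of_dist_le_mul
      intro r hr s hs
      have h1 : F r - F s = ∫ x in Ω, (u x r - u x s) :=
        (integral_sub (hu r hr.1) (hu s hs.1)).symm
      have h2 : ‖∫ x in Ω, (u x r - u x s)‖ ≤ ∫ x in Ω, g x * ‖r - s‖ := by
        apply norm_integral_le_of_norm_le (hg.mul_const _)
        rw [ae_restrict_iff' hΩ]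
        exact ae_of_all _ fun x hx => hptw x hx s hs.1 r hr.1
      rw [Real.dist_eq, ← Real.norm_eq_abs, h1]
      calc ‖∫ x in Ω, (u x r - u x s)‖ ≤ ∫ x in Ω, g x * ‖r - s‖ := h2
        _ = (∫ x in Ω, g x) * ‖r - s‖ := integral_mul_const _ _
        _ ≤ (Real.toNNReal (∫ x in Ω, g x)) * ‖r - s‖ :=
            mul_le_mul_of_nonneg_right (Real.le_coe_toNNReal _) (norm_nonneg _)
        _ = (Real.toNNReal (∫ x in Ω, g x)) * dist r s := by rw [Real.dist_eq, Real.norm_eq_abs]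
    exact hlip.continuousOn
  -- derivative of F at interior points
  have hDer : ∀ τ ∈ Set.Ioo (0:ℝ) t, HasDerivAt F (-(φ τ)) τ := by
    intro τ hτ
    have hτ0 : 0 < τ := hτ.1
    have hball : ∀ s ∈ Metric.ball τ τ, 0 < s := by
      intro s hs
      rw [Metric.mem_ball, Real.dist_eq, abs_sub_lt_iff] at hs
      linarith [hs.2]
    have hder := hasDerivAt_integral_of_dominated_loc_of_deriv_le
      (μ := volume.restrict Ω) (F := fun s x => u x s) (F' := fun s x => D x s)
      (x₀ := τ) (s := Metric.ball τ τ) (bound := g) (Metric.ball_mem_nhds τ hτ0)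
      (by filter_upwards [eventually_gt_nhds hτ0] with s hs
          exact (hu s hs.le).aestronglyMeasurable)
      (hu τ hτ0.le)
      ((hDint τ hτ0.le).aestronglyMeasurable)
      (by rw [ae_restrict_iff' hΩ]
          exact ae_of_all _ fun x hx s hs => by
            rw [Real.norm_eq_abs]; exact hbound x hx s (hball s hs).le)
      hg
      (by rw [ae_restrict_iff' hΩ]
          exact ae_of_all _ fun x hx s hs => hderiv x hx s (hball s hs).le)
    have := hder.2
    rwa [hflux τ hτ0.le] at this
  -- fundamental theorem of calculus
  have hintφ : IntervalIntegrable (fun s => -(φ s)) volume 0 t := by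
    apply ContinuousOn.intervalIntegrable
    rw [Set.uIcc_of_le ht]
    exact (hcont.mono Set.Icc_subset_Ici_self).neg
  have hFTC := intervalIntegral.integral_eq_sub_of_hasDeriv_right_of_le ht hFcont
    (fun τ hτ => (hDer τ hτ).hasDerivWithinAt) hintφ
  rw [intervalIntegral.integral_neg] at hFTC
  linarith [hFTC]
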